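/- (Hopf trace formula) Let R be a commutative ring and let C_• be a bounded chain complex of finitely generated free R-modules whose homology modules H_q(C) are all free. If f_• : C_• → C_• is a chain map, then ∑_q (-1)^q Tr(f_q : C_q → C_q) = ∑_q (-1)^q Tr(H_q(f) : H_q(C) → H_q(C)). -/

import Mathlib

open CategoryTheory

section HopfAux
open LinearMap

section Level
variable {R : Type} [CommRing R]
variable {Mn Hn : Type} [AddCommGroup Mn] [Module R Mn] [AddCommGroup Hn] [Module R Hn]
variable [Module.Free R Mn] [Module.Finite R Mn] [Module.Free R Hn] [Module.Finite R Hn]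

theorem hopf_level (Zn Bn : Submodule R Mn) (hBZ : Bn ≤ Zn)
    (Fn : Mn →ₗ[R] Mn) (hfn : Hn →ₗ[R] Hn)
    (p : Zn →ₗ[R] Hn) (hps : Function.Surjective p)
    (hker : ∀ z : Zn, p z = 0 ↔ (z : Mn) ∈ Bn)
    (hFZ : ∀ x ∈ Zn, Fn x ∈ Zn)
    (hnat : ∀ (z : Zn) (hz : Fn z ∈ Zn), p ⟨Fn z, hz⟩ = hfn (p z))
    (eZ : Mn →ₗ[R] Mn) (heZmem : ∀ x, eZ x ∈ Zn) (heZfix : ∀ x ∈ Zn, eZ x = x) :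
    ∃ eB : Mn →ₗ[R] Mn, (∀ x, eB x ∈ Bn) ∧ (∀ x ∈ Bn, eB x = x) ∧
      trace R Mn (eZ ∘ₗ Fn) = trace R Mn (eB ∘ₗ Fn) + trace R Hn hfn := by
  obtain ⟨s, hs⟩ := Module.projective_lifting_property p (LinearMap.id) hps
  have hs' : ∀ x : Hn, p (s x) = x := fun x => congrFun (congrArg DFunLike.coe hs) x
  set eZ' : Mn →ₗ[R] Zn := eZ.codRestrict Zn heZmem with heZ'
  set eB : Mn →ₗ[R] Mn := Zn.subtype ∘ₗ (LinearMap.id - s ∘ₗ p) ∘ₗ eZ' with heB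
  set u : Mn →ₗ[R] Hn := p ∘ₗ eZ' with hu
  set v : Hn →ₗ[R] Mn := Zn.subtype ∘ₗ s with hv
  have heBmem : ∀ x, eB x ∈ Bn := by
    intro x
    have : p (((LinearMap.id : Zn →ₗ[R] Zn) - s ∘ₗ p) (eZ' x)) = 0 := by
      simp [hs']
    have := (hker _).1 this
    simpa [heB] using this
  have heBfix : ∀ x ∈ Bn, eB x = x := by
    intro x hx
    have hxZ : x ∈ Zn := hBZ hx
    have h1 : eZ' x = ⟨x, hxZ⟩ := Subtype.ext (heZfix x hxZ)
    have h2 : p ⟨x, hxZ⟩ = 0 := (hker ⟨x, hxZ⟩).2 hx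
    simp [heB, h1, h2]
  refine ⟨eB, heBmem, heBfix, ?_⟩
  have hdecomp : eZ ∘ₗ Fn = eB ∘ₗ Fn + (v ∘ₗ u) ∘ₗ Fn := by
    ext x
    simp [heB, hv, hu, heZ', LinearMap.codRestrict_apply]
  have huv : u ∘ₗ Fn ∘ₗ v = hfn := by
    ext x
    have hvZ : v x ∈ Zn := (s x).2
    have hFvZ : Fn (v x) ∈ Zn := hFZ _ hvZ
    have h1 : eZ' (Fn (v x)) = ⟨Fn (v x), hFvZ⟩ := Subtype.ext (heZfix _ hFvZ)
    have h2 : (⟨v x, hvZ⟩ : Zn) = s x := Subtype.ext rfl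
    calc u (Fn (v x)) = p ⟨Fn (v x), hFvZ⟩ := by rw [hu]; simp [h1]
    _ = hfn (p ⟨v x, hvZ⟩) := hnat ⟨v x, hvZ⟩ hFvZ
    _ = hfn x := by rw [h2, hs']
  have : trace R Mn ((v ∘ₗ u) ∘ₗ Fn) = trace R Hn hfn := by
    rw [LinearMap.comp_assoc, trace_comp_comm' (u ∘ₗ Fn) v]
    rw [show (u ∘ₗ Fn) ∘ₗ v = hfn from by rw [LinearMap.comp_assoc]; exact huv]
  rw [hdecomp, map_add, this]

end Level

section Abstract
variable {R : Type} [CommRing R]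

theorem hopf_abstract
    (M : ℕ → Type) [∀ n, AddCommGroup (M n)] [∀ n, Module R (M n)]
    [∀ n, Module.Free R (M n)] [∀ n, Module.Finite R (M n)]
    (Hm : ℕ → Type) [∀ n, AddCommGroup (Hm n)] [∀ n, Module R (Hm n)]
    [∀ n, Module.Free R (Hm n)] [∀ n, Module.Finite R (Hm n)]
    (D : ∀ n, M (n+1) →ₗ[R] M n) (F : ∀ n, M n →ₗ[R] M n)
    (hf : ∀ n, Hm n →ₗ[R] Hm n)
    (Z : ∀ n, Submodule R (M n))
    (hZ0 : Z 0 = ⊤)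
    (hZsucc : ∀ n, Z (n+1) = LinearMap.ker (D n))
    (hBZ : ∀ n, LinearMap.range (D n) ≤ Z n)
    (hFD : ∀ n, (D n).comp (F (n+1)) = (F n).comp (D n))
    (hFZ : ∀ n, ∀ x ∈ Z n, F n x ∈ Z n)
    (p : ∀ n, (Z n) →ₗ[R] Hm n)
    (hps : ∀ n, Function.Surjective (p n))
    (hker : ∀ n (z : Z n), p n z = 0 ↔ (z : M n) ∈ LinearMap.range (D n))
    (hnat : ∀ n (z : Z n) (hz : F n z ∈ Z n), p n ⟨F n z, hz⟩ = hf n (p n z))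
    (N : ℕ) (hDN : D N = 0) :
    ∑ n ∈ Finset.range (N+1), (-1:R)^n * trace R (M n) (F n)
      = ∑ n ∈ Finset.range (N+1), (-1:R)^n * trace R (Hm n) (hf n) := by
  -- main induction: partial alternating sums differ by the boundary trace
  have main : ∀ n : ℕ, ∃ eB : M n →ₗ[R] M n,
      (∀ x, eB x ∈ LinearMap.range (D n)) ∧ (∀ x ∈ LinearMap.range (D n), eB x = x) ∧
      (∑ k ∈ Finset.range (n+1),
          (-1:R)^k * (trace R (M k) (F k) - trace R (Hm k) (hf k))
        = (-1:R)^n * trace R (M n) (eB ∘ₗ F n)) := by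
    intro n
    induction n with
    | zero =>
      obtain ⟨eB, h1, h2, h3⟩ := hopf_level (Z 0) (LinearMap.range (D 0)) (hBZ 0)
        (F 0) (hf 0) (p 0) (hps 0) (hker 0) (hFZ 0) (hnat 0)
        LinearMap.id (by intro x; rw [hZ0]; trivial) (fun x _ => rfl)
      refine ⟨eB, h1, h2, ?_⟩
      rw [LinearMap.id_comp] at h3
      rw [Finset.sum_range_one, h3]
      ring
    | succ n ih =>
      obtain ⟨eB, h1, h2, h3⟩ := ih
      -- construct the section σ : M n → M (n+1) with D n ∘ σ = eB
      have hsurj : Function.Surjective (D n).rangeRestrict :=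
        LinearMap.surjective_rangeRestrict (D n)
      obtain ⟨σ, hσ⟩ := Module.projective_lifting_property (D n).rangeRestrict
        (eB.codRestrict (LinearMap.range (D n)) h1) hsurj
      have hDσ : (D n) ∘ₗ σ = eB := by
        have h := congrArg (fun (q : M n →ₗ[R] LinearMap.range (D n)) =>
          (LinearMap.range (D n)).subtype ∘ₗ q) hσ
        simpa [← LinearMap.comp_assoc, LinearMap.subtype_comp_codRestrict] using h
      have hDσ' : ∀ x, D n (σ x) = eB x := fun x =>
        congrFun (congrArg DFunLike.coe hDσ) x
      set eZ : M (n+1) →ₗ[R] M (n+1) := LinearMap.id - σ ∘ₗ D n with heZ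
      have heZmem : ∀ x, eZ x ∈ Z (n+1) := by
        intro x
        rw [hZsucc]
        simp only [heZ, LinearMap.sub_apply, LinearMap.id_apply, LinearMap.coe_comp,
          Function.comp_apply, LinearMap.mem_ker, map_sub, hDσ']
        rw [h2 (D n x) ⟨x, rfl⟩, sub_self]
      have heZfix : ∀ x ∈ Z (n+1), eZ x = x := by
        intro x hx
        rw [hZsucc] at hx
        simp only [heZ, LinearMap.sub_apply, LinearMap.id_apply, LinearMap.coe_comp,
          Function.comp_apply, LinearMap.mem_ker.1 hx, map_zero, sub_zero]
      obtain ⟨eB', h1', h2', h3'⟩ := hopf_level (Z (n+1)) (LinearMap.range (D (n+1)))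
        (hBZ (n+1)) (F (n+1)) (hf (n+1)) (p (n+1)) (hps (n+1)) (hker (n+1)) (hFZ (n+1))
        (hnat (n+1)) eZ heZmem heZfix
      refine ⟨eB', h1', h2', ?_⟩
      -- the cross trace identity
      have hcross : trace R (M (n+1)) ((σ ∘ₗ D n) ∘ₗ F (n+1))
          = trace R (M n) (eB ∘ₗ F n) := by
        rw [LinearMap.comp_assoc, hFD n, trace_comp_comm' ((F n).comp (D n)) σ,
          LinearMap.comp_assoc, hDσ]
        exact trace_mul_comm R (F n) eB
      have hsplitmap : F (n+1) = eZ ∘ₗ F (n+1) + (σ ∘ₗ D n) ∘ₗ F (n+1) := by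
        rw [← LinearMap.add_comp, heZ, sub_add_cancel, LinearMap.id_comp]
      have hT : trace R (M (n+1)) (F (n+1))
          = trace R (M (n+1)) (eB' ∘ₗ F (n+1)) + trace R (Hm (n+1)) (hf (n+1))
            + trace R (M n) (eB ∘ₗ F n) := by
        conv_lhs => rw [hsplitmap]
        rw [map_add, h3', hcross]
      rw [Finset.sum_range_succ, h3, hT]
      ring
  obtain ⟨eB, h1, _, h3⟩ := main N
  have hB0 : eB = 0 := by
    ext x
    have hx := h1 x
    rw [hDN] at hx
    simpa using hx
  rw [hB0] at h3
  simp only [LinearMap.zero_comp, map_zero, mul_zero] at h3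
  simp only [mul_sub] at h3
  rw [Finset.sum_sub_distrib] at h3
  exact sub_eq_zero.1 h3
end Abstract

section Main
variable {R : Type} [CommRing R]

theorem hopf_main
    (C : ChainComplex (ModuleCat.{0} R) ℕ) (f : C ⟶ C) (N : ℕ)
    [∀ n, Module.Free R (C.X n)] [∀ n, Module.Finite R (C.X n)]
    [∀ n, Module.Free R (C.homology n)] [∀ n, Module.Finite R (C.homology n)]
    (hbdd : ∀ n, N < n → Subsingleton (C.X n)) :
    ∑ n ∈ Finset.range (N + 1), (-1 : R) ^ n * LinearMap.trace R (C.X n) (f.f n).hom =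
      ∑ n ∈ Finset.range (N + 1),
        (-1 : R) ^ n * LinearMap.trace R (C.homology n) (HomologicalComplex.homologyMap f n).hom := by
  classical
  set c := ComplexShape.down ℕ with hc
  set D : ∀ n : ℕ, (C.X (n+1) : Type) →ₗ[R] C.X n := fun n => (C.d (n+1) n).hom with hD
  set Z : ∀ n : ℕ, Submodule R (C.X n) := fun n => LinearMap.ker
    ((C.sc n).g.hom : C.X n →ₗ[R] C.X (c.next n)) with hZ
  set p : ∀ n : ℕ, (Z n) →ₗ[R] (C.homology n) := fun n =>
    ((C.sc n).moduleCatHomologyIso.inv.hom : (C.sc n).moduleCatLeftHomologyData.H →ₗ[R] (C.sc n).homology)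
      ∘ₗ (LinearMap.range (C.sc n).moduleCatToCycles).mkQ with hp
  -- range of S.f equals range of D n
  have hrange : ∀ n : ℕ, LinearMap.range ((C.sc n).f.hom : C.X (c.prev n) →ₗ[R] C.X n)
      = LinearMap.range (D n) := by
    intro n
    have h : c.prev n = n + 1 := ChainComplex.prev ℕ n
    have hd : (C.XIsoOfEq h).hom ≫ C.d (n+1) n = C.d (c.prev n) n :=
      C.XIsoOfEq_hom_comp_d h n
    apply le_antisymm
    · rintro x ⟨y, rfl⟩
      refine ⟨(C.XIsoOfEq h).hom y, ?_⟩
      have h3 := LinearMap.congr_fun (congrArg ModuleCat.Hom.hom hd) y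
      simp only [ModuleCat.hom_comp, LinearMap.comp_apply] at h3
      exact h3
    · rintro x ⟨y, rfl⟩
      refine ⟨(C.XIsoOfEq h).inv y, ?_⟩
      show ((C.d (c.prev n) n).hom : C.X (c.prev n) →ₗ[R] C.X n) ((C.XIsoOfEq h).inv y)
        = ((C.d (n+1) n).hom : C.X (n+1) →ₗ[R] C.X n) y
      have h3 := LinearMap.congr_fun (congrArg ModuleCat.Hom.hom hd) ((C.XIsoOfEq h).inv y)
      simp only [ModuleCat.hom_comp, LinearMap.comp_apply] at h3
      rw [← h3]
      congr 1
      exact (C.XIsoOfEq h).toLinearEquiv.apply_symm_apply y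
  have hmemrange : ∀ n (z : Z n),
      z ∈ LinearMap.range (C.sc n).moduleCatToCycles ↔ (z : C.X n) ∈ LinearMap.range (D n) := by
    intro n z
    rw [← hrange n]
    constructor
    · rintro ⟨x, rfl⟩
      exact ⟨x, rfl⟩
    · rintro ⟨x, hx⟩
      exact ⟨x, Subtype.ext hx⟩
  have hiso_inj : ∀ n : ℕ, Function.Injective
      ((C.sc n).moduleCatHomologyIso.inv.hom :
        (C.sc n).moduleCatLeftHomologyData.H →ₗ[R] (C.sc n).homology) :=
    fun n => ((C.sc n).moduleCatHomologyIso.symm.toLinearEquiv).injective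
  have hiso_surj : ∀ n : ℕ, Function.Surjective
      ((C.sc n).moduleCatHomologyIso.inv.hom :
        (C.sc n).moduleCatLeftHomologyData.H →ₗ[R] (C.sc n).homology) :=
    fun n => ((C.sc n).moduleCatHomologyIso.symm.toLinearEquiv).surjective
  refine hopf_abstract (R := R) (fun n => C.X n) (fun n => C.homology n)
    D (fun n => (f.f n).hom) (fun n => (HomologicalComplex.homologyMap f n).hom) Z
    ?hZ0 ?hZsucc ?hBZ ?hFD ?hFZ p ?hps ?hker ?hnat N ?hDN
  case hZ0 =>
    show LinearMap.ker ((C.sc 0).g.hom : C.X 0 →ₗ[R] C.X (c.next 0)) = ⊤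
    have h0 : ((C.sc 0).g.hom : C.X 0 →ₗ[R] C.X (c.next 0)) = 0 :=
      (congrArg ModuleCat.Hom.hom (C.shape 0 (c.next 0) (fun hcon => Nat.succ_ne_zero _ hcon))).trans ModuleCat.hom_zero
    rw [h0, LinearMap.ker_zero]
  case hZsucc =>
    intro n
    have h : c.next (n+1) = n := ChainComplex.next_nat_succ n
    have hd : C.d (n+1) (c.next (n+1)) ≫ (C.XIsoOfEq h).hom = C.d (n+1) n :=
      C.d_comp_XIsoOfEq_hom h (n+1)
    show LinearMap.ker ((C.sc (n+1)).g.hom : C.X (n+1) →ₗ[R] C.X (c.next (n+1)))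
      = LinearMap.ker (D n)
    ext x
    simp only [LinearMap.mem_ker]
    have h3 := LinearMap.congr_fun (congrArg ModuleCat.Hom.hom hd) x
    simp only [ModuleCat.hom_comp, LinearMap.comp_apply] at h3
    constructor
    · intro hx
      show ((C.d (n+1) n).hom : C.X (n+1) →ₗ[R] C.X n) x = 0
      have hx' : ((C.sc (n+1)).g.hom : C.X (n+1) →ₗ[R] C.X (c.next (n+1))) x = 0 := hx
      rw [← h3]
      have hg' : ((C.d (n+1) (c.next (n+1))).hom : C.X (n+1) →ₗ[R] C.X (c.next (n+1))) x = 0 := hx'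
      exact (congrArg (C.XIsoOfEq h).hom.hom hg').trans (map_zero _)
    · intro hx
      have hx' : ((C.d (n+1) n).hom : C.X (n+1) →ₗ[R] C.X n) x = 0 := hx
      show ((C.d (n+1) (c.next (n+1))).hom : C.X (n+1) →ₗ[R] C.X (c.next (n+1))) x = 0
      have h4 : (C.XIsoOfEq h).hom (((C.d (n+1) (c.next (n+1))).hom
          : C.X (n+1) →ₗ[R] C.X (c.next (n+1))) x) = (C.XIsoOfEq h).hom 0 := by
        exact h3.trans (hx'.trans (map_zero (C.XIsoOfEq h).hom.hom).symm)
      exact ((C.XIsoOfEq h).toLinearEquiv).injective h4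
  case hBZ =>
    intro n
    rintro x ⟨y, rfl⟩
    show ((C.sc n).g.hom : C.X n →ₗ[R] C.X (c.next n)) (D n y) = 0
    have h3 := LinearMap.congr_fun (congrArg ModuleCat.Hom.hom (C.d_comp_d (n+1) n (c.next n))) y
    simp only [ModuleCat.hom_comp, LinearMap.comp_apply] at h3
    exact h3.trans rfl
  case hFD =>
    intro n
    exact congrArg ModuleCat.Hom.hom (f.comm (n+1) n)
  case hFZ =>
    intro n x hx
    have hx0 : ((C.d n (c.next n)).hom : C.X n →ₗ[R] C.X (c.next n)) x = 0 := hx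
    have hcomm := LinearMap.congr_fun (congrArg ModuleCat.Hom.hom (f.comm n (c.next n))) x
    simp only [ModuleCat.hom_comp, LinearMap.comp_apply] at hcomm
    show ((C.d n (c.next n)).hom : C.X n →ₗ[R] C.X (c.next n)) (f.f n x) = 0
    rw [hcomm, hx0, map_zero]
  case hps =>
    intro n
    exact (hiso_surj n).comp (Submodule.mkQ_surjective (LinearMap.range (C.sc n).moduleCatToCycles))
  case hker =>
    intro n z
    show ((C.sc n).moduleCatHomologyIso.inv.hom :
        (C.sc n).moduleCatLeftHomologyData.H →ₗ[R] (C.sc n).homology)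
        ((LinearMap.range (C.sc n).moduleCatToCycles).mkQ z) = 0
      ↔ (z : C.X n) ∈ LinearMap.range (D n)
    rw [← hmemrange n z]
    constructor
    · intro h
      have h0 : ((C.sc n).moduleCatHomologyIso.inv.hom :
          (C.sc n).moduleCatLeftHomologyData.H →ₗ[R] (C.sc n).homology) 0 = 0 := map_zero _
      have := hiso_inj n (h.trans h0.symm)
      exact (Submodule.Quotient.mk_eq_zero _).1 this
    · intro h
      exact (congrArg (C.sc n).moduleCatHomologyIso.inv.hom ((Submodule.Quotient.mk_eq_zero _).2 h)).trans (map_zero _)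
  case hnat =>
    intro n z hz
    set S := C.sc n with hS
    set phiS := (HomologicalComplex.shortComplexFunctor (ModuleCat.{0} R) c n).map f with hphiS
    set J : S.cycles →ₗ[R] S.homology := (S.homologyπ.hom : S.cycles →ₗ[R] S.homology) with hJ
    set I : (Z n) →ₗ[R] S.cycles :=
      (S.moduleCatCyclesIso.inv.hom : S.moduleCatLeftHomologyData.K →ₗ[R] S.cycles) with hI
    have e1 : ∀ w : Z n, p n w = J (I w) :=
      fun w => (S.moduleCatCyclesIso_inv_π_apply w).symm
    have hinj : Function.Injective (S.iCycles.hom : S.cycles →ₗ[R] C.X n) :=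
      (ModuleCat.mono_iff_injective S.iCycles).1 inferInstance
    have h1 : ∀ w : S.cycles, (S.iCycles.hom : S.cycles →ₗ[R] C.X n)
        (((ShortComplex.cyclesMap phiS).hom : S.cycles →ₗ[R] S.cycles) w)
        = ((f.f n).hom : C.X n →ₗ[R] C.X n) ((S.iCycles.hom : S.cycles →ₗ[R] C.X n) w) := by
      intro w
      have h := LinearMap.congr_fun (congrArg ModuleCat.Hom.hom (ShortComplex.cyclesMap_i phiS)) w
      simp only [ModuleCat.hom_comp, LinearMap.comp_apply] at h
      exact h
    have h2 : ∀ w : Z n, (S.iCycles.hom : S.cycles →ₗ[R] C.X n) (I w) = (w : C.X n) :=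
      fun w => S.moduleCatCyclesIso_inv_iCycles_apply w
    have claim : ((ShortComplex.cyclesMap phiS).hom : S.cycles →ₗ[R] S.cycles) (I z)
        = I ⟨f.f n z, hz⟩ := by
      apply hinj
      rw [h1, h2, h2]
    have e2 : ∀ w : S.cycles,
        ((ShortComplex.homologyMap phiS).hom : S.homology →ₗ[R] S.homology) (J w)
        = J (((ShortComplex.cyclesMap phiS).hom : S.cycles →ₗ[R] S.cycles) w) := by
      intro w
      have h := LinearMap.congr_fun (congrArg ModuleCat.Hom.hom (ShortComplex.homologyπ_naturality phiS)) w
      simp only [ModuleCat.hom_comp, LinearMap.comp_apply] at h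
      exact h
    show p n ⟨f.f n z, hz⟩
      = ((ShortComplex.homologyMap phiS).hom : S.homology →ₗ[R] S.homology) (p n z)
    rw [e1 z, e1 ⟨f.f n z, hz⟩, e2, claim]
  case hDN =>
    have hsub := hbdd (N+1) (by omega)
    show (fun n => ((C.d (n+1) n).hom : C.X (n+1) →ₗ[R] C.X n)) N = 0
    ext x
    show ((C.d (N+1) N).hom : C.X (N+1) →ₗ[R] C.X N) x = 0
    rw [Subsingleton.elim x 0, map_zero]
end Main

end HopfAux

/-- Hopf trace formula: for a bounded chain complex of finitely generated free
modules with free homology, and a chain self-map `f`, the alternating sum of the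
traces of `f` on the chain modules equals the alternating sum of the traces of
the induced maps on homology. -/
theorem hopf_trace_formula {R : Type} [CommRing R]
    (C : ChainComplex (ModuleCat.{0} R) ℕ) (f : C ⟶ C) (N : ℕ)
    [∀ n, Module.Free R (C.X n)] [∀ n, Module.Finite R (C.X n)]
    [∀ n, Module.Free R (C.homology n)] [∀ n, Module.Finite R (C.homology n)]
    (hbdd : ∀ n, N < n → Subsingleton (C.X n)) :
    ∑ n ∈ Finset.range (N + 1), (-1 : R) ^ n * LinearMap.trace R (C.X n) (f.f n).hom =
      ∑ n ∈ Finset.range (N + 1),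
        (-1 : R) ^ n * LinearMap.trace R (C.homology n) (HomologicalComplex.homologyMap f n).hom := by
  exact hopf_main C f N hbdd
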